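/- Let π be a representation of a C*-algebra A on a Hilbert space H such that π(A) has a cyclic set of m vectors. If the single-vector-cyclic case satisfies LD_{12}, then π has the local distance property LD_{12m}: specifically, for any bounded map φ between C*-algebras one has ‖φ ⊗ id_{M_m}‖ ≤ m‖φ‖, and combining this with the cyclic-vector estimate d(y ⊗ I_m, π(A)′ ⊗ I_m) ≤ 12‖ad(y ⊗ I_m)|_{π(A)⊗M_m}‖ yields d(y, π(A)′) ≤ 12m‖ad(y)|_{π(A)}‖ for all y ∈ B(H). -/

import Mathlib

set_option synthInstance.maxHeartbeats 1000000
set_option maxHeartbeats 1000000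

/-- The near inclusion `A ⊆_γ B`: every element of the closed unit ball of `A` lies within
distance `γ` of some element of `B`. -/
def nearIncl {E : Type*} [NormedRing E] (A B : Set E) (γ : ℝ) : Prop :=
  ∀ x ∈ A, ‖x‖ ≤ 1 → ∃ y ∈ B, ‖x - y‖ ≤ γ

/-- The Kadison–Kastler distance between two subsets of a C*-algebra: the infimum of all
`γ > 0` such that each element of the unit ball of either set is within `γ` of an element
of the unit ball of the other. -/
noncomputable def kkDist {E : Type*} [NormedRing E] (A B : Set E) : ℝ :=
  sInf {γ : ℝ | 0 < γ ∧
    (∀ x ∈ A, ‖x‖ ≤ 1 → ∃ y ∈ B, ‖y‖ ≤ 1 ∧ ‖x - y‖ < γ) ∧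
    (∀ y ∈ B, ‖y‖ ≤ 1 → ∃ x ∈ A, ‖x‖ ≤ 1 ∧ ‖y - x‖ < γ)}

/-- The commutant of a set of bounded operators on a Hilbert space. -/
noncomputable def commutant {H : Type*} [NormedAddCommGroup H] [InnerProductSpace ℂ H]
    [CompleteSpace H] (S : Set (H →L[ℂ] H)) : Set (H →L[ℂ] H) :=
  {x | ∀ a ∈ S, a * x = x * a}

/-- `adNorm S x` is `‖ad(x)|_S‖`, the norm of the derivation `a ↦ xa - ax` restricted to `S`. -/
noncomputable def adNorm {H : Type*} [NormedAddCommGroup H] [InnerProductSpace ℂ H]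
    [CompleteSpace H] (S : Set (H →L[ℂ] H)) (x : H →L[ℂ] H) : ℝ :=
  sSup {r : ℝ | ∃ a ∈ S, ‖a‖ ≤ 1 ∧ r = ‖x * a - a * x‖}

/-! ### Auxiliary development: operators on `H^m` as matrices of operators on `H`. -/

open scoped InnerProductSpace

noncomputable section LDaux

set_option linter.unusedSectionVars false

/-- The `ℓ²`-direct sum of `m` copies of `H`. -/
abbrev LDK (H : Type*) (m : ℕ) := PiLp 2 (fun _ : Fin m => H)

variable {H : Type*} [NormedAddCommGroup H] [InnerProductSpace ℂ H] [CompleteSpace H] {m : ℕ}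

instance LDK.instCompleteSpace : CompleteSpace (LDK H m) := inferInstance

lemma LDK_ext {v w : LDK H m} (h : ∀ j, v j = w j) : v = w := PiLp.ext h

lemma LDK_sum_apply {ι : Type*} (s : Finset ι) (f : ι → LDK H m) (i : Fin m) :
    (∑ l ∈ s, f l) i = ∑ l ∈ s, f l i := by
  rw [WithLp.ofLp_sum]; exact Finset.sum_apply i s _

lemma LDK_apply_norm_le (v : LDK H m) (j : Fin m) : ‖v j‖ ≤ ‖v‖ := by
  have h : ‖v j‖ ^ 2 ≤ ‖v‖ ^ 2 := by
    rw [PiLp.norm_sq_eq_of_L2]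
    exact Finset.single_le_sum (f := fun i => ‖v i‖ ^ 2) (fun i _ => sq_nonneg _)
      (Finset.mem_univ j)
  have := Real.sqrt_le_sqrt h
  rwa [Real.sqrt_sq (norm_nonneg _), Real.sqrt_sq (norm_nonneg _)] at this

/-- The linear map on `H^m` given by a matrix of operators. -/
def matL (M : Fin m → Fin m → (H →L[ℂ] H)) : LDK H m →ₗ[ℂ] LDK H m where
  toFun v := (WithLp.equiv 2 _).symm (fun j => ∑ k, M j k (v k))
  map_add' v w := by
    apply LDK_ext; intro j
    simp [WithLp.equiv_symm_apply, PiLp.toLp_apply, PiLp.add_apply, Finset.sum_add_distrib]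
  map_smul' c v := by
    apply LDK_ext; intro j
    simp [WithLp.equiv_symm_apply, PiLp.toLp_apply, PiLp.smul_apply, Finset.smul_sum]

lemma matL_apply (M : Fin m → Fin m → (H →L[ℂ] H)) (v : LDK H m) (j : Fin m) :
    matL M v j = ∑ k, M j k (v k) := rfl

lemma matL_norm_bound (M : Fin m → Fin m → (H →L[ℂ] H)) (v : LDK H m) :
    ‖matL M v‖ ≤ Real.sqrt (∑ j, ∑ k, ‖M j k‖ ^ 2) * ‖v‖ := by
  have h1 : ‖matL M v‖ ^ 2 ≤ (∑ j, ∑ k, ‖M j k‖ ^ 2) * ‖v‖ ^ 2 := by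
    rw [PiLp.norm_sq_eq_of_L2]
    calc ∑ j, ‖matL M v j‖ ^ 2
        ≤ ∑ j, (∑ k, ‖M j k‖ ^ 2) * (∑ k, ‖v k‖ ^ 2) := by
          refine Finset.sum_le_sum fun j _ => ?_
          calc ‖matL M v j‖ ^ 2 ≤ (∑ k, ‖M j k‖ * ‖v k‖) ^ 2 := by
                apply pow_le_pow_left₀ (norm_nonneg _)
                rw [matL_apply]
                refine (norm_sum_le _ _).trans (Finset.sum_le_sum fun k _ => ?_)
                exact (M j k).le_opNorm (v k)
            _ ≤ (∑ k, ‖M j k‖ ^ 2) * (∑ k, ‖v k‖ ^ 2) :=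
                Finset.sum_mul_sq_le_sq_mul_sq _ _ _
      _ = (∑ j, ∑ k, ‖M j k‖ ^ 2) * (∑ k, ‖v k‖ ^ 2) := by rw [Finset.sum_mul]
      _ = (∑ j, ∑ k, ‖M j k‖ ^ 2) * ‖v‖ ^ 2 := by rw [← PiLp.norm_sq_eq_of_L2]
  have h2 : (0:ℝ) ≤ Real.sqrt (∑ j, ∑ k, ‖M j k‖ ^ 2) * ‖v‖ :=
    mul_nonneg (Real.sqrt_nonneg _) (norm_nonneg _)
  nlinarith [Real.sq_sqrt (show (0:ℝ) ≤ ∑ j, ∑ k, ‖M j k‖ ^ 2 from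
    Finset.sum_nonneg fun _ _ => Finset.sum_nonneg fun _ _ => sq_nonneg _),
    norm_nonneg (matL M v)]

/-- The bounded operator on `H^m` given by a matrix of operators. -/
def matOp (M : Fin m → Fin m → (H →L[ℂ] H)) : LDK H m →L[ℂ] LDK H m :=
  (matL M).mkContinuous (Real.sqrt (∑ j, ∑ k, ‖M j k‖ ^ 2)) (matL_norm_bound M)

lemma matOp_apply (M : Fin m → Fin m → (H →L[ℂ] H)) (v : LDK H m) (j : Fin m) :
    matOp M v j = ∑ k, M j k (v k) := rfl

lemma matOp_norm_le (M : Fin m → Fin m → (H →L[ℂ] H)) :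
    ‖matOp M‖ ≤ Real.sqrt (∑ j, ∑ k, ‖M j k‖ ^ 2) :=
  LinearMap.mkContinuous_norm_le _ (Real.sqrt_nonneg _) _

/-- Inclusion of `H` as the `k`-th coordinate. -/
def singCLM (k : Fin m) : H →L[ℂ] LDK H m :=
  LinearMap.mkContinuous
    { toFun := fun w => (WithLp.equiv 2 _).symm (Pi.single k w)
      map_add' := fun w w' => by
        apply LDK_ext; intro j
        simp [WithLp.equiv_symm_apply, PiLp.toLp_apply, PiLp.add_apply, Pi.single_add]
      map_smul' := fun c w => by
        apply LDK_ext; intro j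
        simp [WithLp.equiv_symm_apply, PiLp.toLp_apply, PiLp.smul_apply, Pi.single_smul]}
    1 (fun w => by
        simp only [LinearMap.coe_mk, AddHom.coe_mk, one_mul]
        rw [WithLp.equiv_symm_apply, PiLp.norm_toLp_single])

lemma singCLM_apply (k : Fin m) (w : H) (j : Fin m) :
    singCLM (m := m) k w j = if j = k then w else 0 := Pi.single_apply k w j

lemma norm_singCLM (k : Fin m) (w : H) : ‖singCLM (m := m) k w‖ = ‖w‖ :=
  PiLp.norm_toLp_single (p := 2) (β := fun _ : Fin m => H) k w

/-- Projection onto the `j`-th coordinate. -/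
def projCLM (j : Fin m) : LDK H m →L[ℂ] H :=
  LinearMap.mkContinuous
    { toFun := fun v => v j
      map_add' := fun v w => rfl
      map_smul' := fun c v => rfl }
    1 (fun v => by rw [one_mul]; exact LDK_apply_norm_le v j)

/-- The `(j,k)` entry of an operator on `H^m`. -/
def entry (c : LDK H m →L[ℂ] LDK H m) (j k : Fin m) : H →L[ℂ] H :=
  (projCLM j).comp (c.comp (singCLM k))

lemma entry_apply (c : LDK H m →L[ℂ] LDK H m) (j k : Fin m) (w : H) :
    entry c j k w = c (singCLM k w) j := rfl

lemma entry_norm_le (c : LDK H m →L[ℂ] LDK H m) (j k : Fin m) : ‖entry c j k‖ ≤ ‖c‖ := by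
  refine ContinuousLinearMap.opNorm_le_bound _ (norm_nonneg c) fun w => ?_
  calc ‖entry c j k w‖ ≤ ‖c (singCLM k w)‖ := LDK_apply_norm_le _ j
    _ ≤ ‖c‖ * ‖singCLM k w‖ := c.le_opNorm _
    _ = ‖c‖ * ‖w‖ := by rw [norm_singCLM]

lemma entry_matOp (M : Fin m → Fin m → (H →L[ℂ] H)) (j k : Fin m) :
    entry (matOp M) j k = M j k := by
  ext w
  rw [entry_apply, matOp_apply, Finset.sum_eq_single k]
  · rw [singCLM_apply, if_pos rfl]
  · intro l _ hl
    rw [singCLM_apply, if_neg hl, map_zero]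
  · simp

lemma matOp_zero : (matOp (fun _ _ => 0) : LDK H m →L[ℂ] LDK H m) = 0 := by
  ext v j
  simp [matOp_apply]

lemma matOp_add (M N : Fin m → Fin m → (H →L[ℂ] H)) :
    matOp M + matOp N = matOp (fun j k => M j k + N j k) := by
  ext v j
  simp [ContinuousLinearMap.add_apply, PiLp.add_apply, matOp_apply, Finset.sum_add_distrib]

lemma matOp_sub (M N : Fin m → Fin m → (H →L[ℂ] H)) :
    matOp M - matOp N = matOp (fun j k => M j k - N j k) := by
  ext v j
  simp [ContinuousLinearMap.sub_apply, PiLp.sub_apply, matOp_apply, Finset.sum_sub_distrib]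

lemma matOp_smul (c : ℂ) (M : Fin m → Fin m → (H →L[ℂ] H)) :
    c • matOp M = matOp (fun j k => c • M j k) := by
  ext v j
  simp [ContinuousLinearMap.smul_apply, PiLp.smul_apply, matOp_apply, Finset.smul_sum]

lemma matOp_mul (M N : Fin m → Fin m → (H →L[ℂ] H)) :
    matOp M * matOp N = matOp (fun j k => ∑ l, M j l * N l k) := by
  ext v j
  simp only [ContinuousLinearMap.mul_apply, matOp_apply, map_sum,
    ContinuousLinearMap.sum_apply, ContinuousLinearMap.coe_sum']
  exact Finset.sum_comm

lemma matOp_star (M : Fin m → Fin m → (H →L[ℂ] H)) :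
    star (matOp M) = matOp (fun j k => star (M k j)) := by
  rw [ContinuousLinearMap.star_eq_adjoint]
  symm
  rw [ContinuousLinearMap.eq_adjoint_iff]
  intro v w
  simp only [PiLp.inner_apply, matOp_apply, sum_inner, inner_sum]
  rw [Finset.sum_comm]
  congr 1; ext j; congr 1; ext k
  rw [ContinuousLinearMap.star_eq_adjoint, ContinuousLinearMap.adjoint_inner_left]

lemma matOp_sing (M : Fin m → Fin m → (H →L[ℂ] H)) (k : Fin m) (w : H) :
    matOp M (singCLM k w) = ∑ l, singCLM l (M l k w) := by
  apply LDK_ext; intro i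
  rw [matOp_apply, LDK_sum_apply]
  have hL : ∀ l : Fin m, M i l (singCLM k w l) = if l = k then M i k w else 0 := by
    intro l; rw [singCLM_apply]
    by_cases h : l = k
    · subst h; simp
    · simp [h]
  have hR : ∀ l : Fin m, singCLM (m := m) l (M l k w) i = if l = i then M i k w else 0 := by
    intro l; rw [singCLM_apply]
    by_cases h : l = i
    · subst h; simp
    · simp [Ne.symm h, h]
  simp only [hL, hR, Finset.sum_ite_eq', Finset.mem_univ, if_pos]

lemma entry_comp_left (M : Fin m → Fin m → (H →L[ℂ] H)) (c : LDK H m →L[ℂ] LDK H m)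
    (j k : Fin m) : entry (matOp M * c) j k = ∑ l, M j l * entry c l k := by
  ext w
  simp only [entry_apply, ContinuousLinearMap.mul_apply, matOp_apply,
    ContinuousLinearMap.sum_apply, ContinuousLinearMap.coe_sum']

lemma entry_comp_right (M : Fin m → Fin m → (H →L[ℂ] H)) (c : LDK H m →L[ℂ] LDK H m)
    (j k : Fin m) : entry (c * matOp M) j k = ∑ l, entry c j l * M l k := by
  ext w
  simp only [entry_apply, ContinuousLinearMap.mul_apply, matOp_sing, map_sum,
    ContinuousLinearMap.sum_apply, ContinuousLinearMap.coe_sum', ContinuousLinearMap.coe_mul,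
    Function.comp_apply]
  rw [LDK_sum_apply]

lemma entry_sub (c d : LDK H m →L[ℂ] LDK H m) (j k : Fin m) :
    entry (c - d) j k = entry c j k - entry d j k := by
  ext w; rfl

/-- The diagonal matrix of a single operator. -/
def diagM (y : H →L[ℂ] H) : Fin m → Fin m → (H →L[ℂ] H) := fun j k => if j = k then y else 0

lemma diagM_mul (y : H →L[ℂ] H) (M : Fin m → Fin m → (H →L[ℂ] H)) :
    matOp (diagM y) * matOp M = matOp (fun j k => y * M j k) := by
  rw [matOp_mul]
  congr 1; ext j k
  simp [diagM, ite_mul, Finset.sum_ite_eq]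

lemma mul_diagM (y : H →L[ℂ] H) (M : Fin m → Fin m → (H →L[ℂ] H)) :
    matOp M * matOp (diagM y) = matOp (fun j k => M j k * y) := by
  rw [matOp_mul]
  congr 1; ext j k
  simp [diagM, mul_ite, Finset.sum_ite_eq']

lemma matOp_single_entry (b : H →L[ℂ] H) (j i : Fin m) (v : LDK H m) :
    matOp (fun p q => if p = j ∧ q = i then b else 0) v = singCLM j (b (v i)) := by
  apply LDK_ext; intro p
  rw [matOp_apply, singCLM_apply]
  have h : ∀ q : Fin m, (if p = j ∧ q = i then b else 0) (v q)
      = if q = i then (if p = j then b (v i) else 0) else 0 := by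
    intro q
    by_cases h2 : q = i
    · subst h2; by_cases h1 : p = j <;> simp [h1]
    · simp [h2]
  rw [Finset.sum_congr rfl fun q _ => h q, Finset.sum_ite_eq' Finset.univ i]
  simp

/-! ### adNorm basics -/

lemma adNorm_bddAbove (S : Set (H →L[ℂ] H)) (y : H →L[ℂ] H) :
    BddAbove {r : ℝ | ∃ a ∈ S, ‖a‖ ≤ 1 ∧ r = ‖y * a - a * y‖} := by
  refine ⟨2 * ‖y‖, ?_⟩
  rintro r ⟨a, _, ha1, rfl⟩
  calc ‖y * a - a * y‖ ≤ ‖y * a‖ + ‖a * y‖ := norm_sub_le _ _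
    _ ≤ ‖y‖ * ‖a‖ + ‖a‖ * ‖y‖ := add_le_add (norm_mul_le _ _) (norm_mul_le _ _)
    _ ≤ 2 * ‖y‖ := by nlinarith [norm_nonneg y, norm_nonneg a]

lemma le_adNorm {S : Set (H →L[ℂ] H)} {y a : H →L[ℂ] H} (hmem : a ∈ S) (ha : ‖a‖ ≤ 1) :
    ‖y * a - a * y‖ ≤ adNorm S y :=
  le_csSup (adNorm_bddAbove S y) ⟨a, hmem, ha, rfl⟩

lemma adNorm_nonneg {S : Set (H →L[ℂ] H)} (h0 : (0 : H →L[ℂ] H) ∈ S) (y : H →L[ℂ] H) :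
    0 ≤ adNorm S y := by
  have := le_adNorm (y := y) h0 (by simp)
  simpa using this

/-! ### The matrix algebra over the range of a representation -/

variable {A : Type*} [NormedRing A] [StarRing A] [CStarRing A]
    [NormedAlgebra ℂ A] [StarModule ℂ A] [CompleteSpace A]

/-- Matrices with entries in the range of `π`, as a non-unital star subalgebra of `B(H^m)`. -/
def LDS (π : A →⋆ₐ[ℂ] (H →L[ℂ] H)) (m : ℕ) :
    NonUnitalStarSubalgebra ℂ (LDK H m →L[ℂ] LDK H m) where
  carrier := {T | ∃ M : Fin m → Fin m → (H →L[ℂ] H),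
    (∀ j k, M j k ∈ Set.range ⇑π) ∧ T = matOp M}
  zero_mem' := ⟨fun _ _ => 0, fun _ _ => ⟨0, map_zero π⟩, matOp_zero.symm⟩
  add_mem' := by
    intro T T' hT hT'
    obtain ⟨M, hM, rfl⟩ := hT
    obtain ⟨N, hN, rfl⟩ := hT'
    refine ⟨fun j k => M j k + N j k, fun j k => ?_, matOp_add M N⟩
    obtain ⟨a, ha⟩ := hM j k
    obtain ⟨b, hb⟩ := hN j k
    exact ⟨a + b, by rw [map_add, ha, hb]⟩
  mul_mem' := by
    intro T T' hT hT'
    obtain ⟨M, hM, rfl⟩ := hT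
    obtain ⟨N, hN, rfl⟩ := hT'
    refine ⟨fun j k => ∑ l, M j l * N l k, fun j k => ?_, matOp_mul M N⟩
    refine Finset.sum_induction _ (· ∈ Set.range ⇑π) ?_ ⟨0, map_zero π⟩ ?_
    · rintro x y ⟨a, rfl⟩ ⟨b, rfl⟩
      exact ⟨a + b, map_add π a b⟩
    · intro l _
      obtain ⟨a, ha⟩ := hM j l
      obtain ⟨b, hb⟩ := hN l k
      exact ⟨a * b, by rw [map_mul, ha, hb]⟩
  smul_mem' := by
    intro c T hT
    obtain ⟨M, hM, rfl⟩ := hT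
    refine ⟨fun j k => c • M j k, fun j k => ?_, matOp_smul c M⟩
    obtain ⟨a, ha⟩ := hM j k
    exact ⟨c • a, by rw [map_smul, ha]⟩
  star_mem' := by
    intro T hT
    obtain ⟨M, hM, rfl⟩ := hT
    refine ⟨fun j k => star (M k j), fun j k => ?_, matOp_star M⟩
    obtain ⟨a, ha⟩ := hM k j
    exact ⟨star a, by rw [map_star, ha]⟩

lemma mem_LDS {π : A →⋆ₐ[ℂ] (H →L[ℂ] H)} {T : LDK H m →L[ℂ] LDK H m} :
    T ∈ LDS π m ↔ ∃ M : Fin m → Fin m → (H →L[ℂ] H),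
      (∀ j k, M j k ∈ Set.range ⇑π) ∧ T = matOp M := Iff.rfl

end LDaux

/-- Proposition 2.6: if representations with a cyclic vector satisfy `LD_12`, then a
representation `π` of a C*-algebra `A` with a cyclic set of `m` vectors satisfies `LD_{12m}`. -/
theorem LD_of_m_cyclic.{u, v} {A : Type u} [NormedRing A] [StarRing A] [CStarRing A]
    [NormedAlgebra ℂ A] [StarModule ℂ A] [CompleteSpace A]
    {H : Type v} [NormedAddCommGroup H] [InnerProductSpace ℂ H] [CompleteSpace H]
    (π : A →⋆ₐ[ℂ] (H →L[ℂ] H)) (m : ℕ) (hm : 0 < m) (ξ : Fin m → H)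
    (hcyc : Dense (Submodule.span ℂ {v : H | ∃ (a : A) (i : Fin m), v = π a (ξ i)} : Set H))
    (h12 : ∀ (K : Type v) [NormedAddCommGroup K] [InnerProductSpace ℂ K] [CompleteSpace K]
      (S : NonUnitalStarSubalgebra ℂ (K →L[ℂ] K)) (ξ0 : K),
      Dense (Submodule.span ℂ {v : K | ∃ a ∈ S, v = a ξ0} : Set K) →
      ∀ y : K →L[ℂ] K, Metric.infDist y (commutant (S : Set (K →L[ℂ] K))) ≤
        12 * adNorm (S : Set (K →L[ℂ] K)) y) :
    ∀ y : H →L[ℂ] H, Metric.infDist y (commutant (Set.range (⇑π))) ≤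
      (12 * m) * adNorm (Set.range (⇑π)) y := by
  classical
  intro y
  set R : Set (H →L[ℂ] H) := Set.range ⇑π with hRdef
  have h0R : (0 : H →L[ℂ] H) ∈ R := ⟨0, map_zero π⟩
  set S := LDS π m with hSdef
  set ξ0 : LDK H m := (WithLp.equiv 2 _).symm ξ with hξ0
  set Y : LDK H m →L[ℂ] LDK H m := matOp (diagM y) with hYdef
  -- density of S ξ0
  have hdense : Dense (Submodule.span ℂ {v : LDK H m | ∃ a ∈ S, v = a ξ0} : Set (LDK H m)) := by
    set W := Submodule.span ℂ {v : LDK H m | ∃ a ∈ S, v = a ξ0} with hW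
    rw [Submodule.dense_iff_topologicalClosure_eq_top]
    rw [eq_top_iff]
    intro v _
    have hsing : ∀ (j : Fin m) (w : H), singCLM j w ∈ W.topologicalClosure := by
      intro j w
      set Vj : Submodule ℂ H :=
        W.topologicalClosure.comap (singCLM (m := m) j : H →L[ℂ] LDK H m).toLinearMap with hVj
      have hVclosed : IsClosed (Vj : Set H) :=
        (W.isClosed_topologicalClosure).preimage (singCLM j).continuous
      have hgen : {u : H | ∃ (a : A) (i : Fin m), u = π a (ξ i)} ⊆ (Vj : Set H) := by
        rintro u ⟨a, i, rfl⟩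
        have hmem : matOp (fun p q => if p = j ∧ q = i then π a else 0) ∈ S := by
          refine ⟨_, fun p q => ?_, rfl⟩
          by_cases h : p = j ∧ q = i
          · rw [if_pos h]; exact ⟨a, rfl⟩
          · rw [if_neg h]; exact h0R
        have : singCLM j (π a (ξ i)) ∈ W := by
          apply Submodule.subset_span
          refine ⟨matOp (fun p q => if p = j ∧ q = i then π a else 0), hmem, ?_⟩
          rw [matOp_single_entry]
          rfl
        exact W.le_topologicalClosure this
      have hspan : Submodule.span ℂ {u : H | ∃ (a : A) (i : Fin m), u = π a (ξ i)} ≤ Vj :=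
        Submodule.span_le.mpr hgen
      have huniv : (Vj : Set H) = Set.univ := by
        apply Set.eq_univ_of_univ_subset
        rw [← hcyc.closure_eq]
        calc closure (Submodule.span ℂ {u : H | ∃ (a : A) (i : Fin m), u = π a (ξ i)} : Set H)
            ⊆ closure (Vj : Set H) := closure_mono hspan
          _ = (Vj : Set H) := hVclosed.closure_eq
      have : w ∈ (Vj : Set H) := by rw [huniv]; trivial
      exact this
    have hv : v = ∑ j, singCLM j (v j) := by
      apply LDK_ext; intro i
      rw [LDK_sum_apply]
      rw [Finset.sum_congr rfl fun j _ => singCLM_apply j (v j) i]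
      simp
    rw [hv]
    exact Submodule.sum_mem _ fun j _ => hsing j (v j)
  -- the key inequality between distances to commutants
  have hcomm_ne : (commutant (S : Set (LDK H m →L[ℂ] LDK H m))).Nonempty :=
    ⟨1, fun a _ => by rw [mul_one, one_mul]⟩
  set j0 : Fin m := ⟨0, hm⟩ with hj0
  have hstep : Metric.infDist y (commutant R) ≤
      Metric.infDist Y (commutant (S : Set (LDK H m →L[ℂ] LDK H m))) := by
    refine le_of_forall_pos_le_add fun ε hε => ?_
    have h' : Metric.infDist Y (commutant (S : Set (LDK H m →L[ℂ] LDK H m)))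
        < Metric.infDist Y (commutant (S : Set (LDK H m →L[ℂ] LDK H m))) + ε := by linarith
    obtain ⟨c, hc, hlt⟩ := (Metric.infDist_lt_iff hcomm_ne).mp h'
    set x := entry c j0 j0 with hx
    have hxcomm : x ∈ commutant R := by
      rintro a ⟨b, rfl⟩
      have hD : matOp (diagM (π b)) ∈ S := by
        refine ⟨diagM (π b), fun j k => ?_, rfl⟩
        unfold diagM
        by_cases h : j = k
        · rw [if_pos h]; exact ⟨b, rfl⟩
        · rw [if_neg h]; exact h0R
      have hcd := hc _ hD
      have h1 := congrArg (fun T => entry T j0 j0) hcd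
      rw [entry_comp_left, entry_comp_right] at h1
      simpa [diagM, ite_mul, mul_ite, Finset.sum_ite_eq, Finset.sum_ite_eq'] using h1
    have hyx : dist y x ≤ dist Y c := by
      rw [dist_eq_norm, dist_eq_norm]
      have hsub : y - x = entry (Y - c) j0 j0 := by
        rw [entry_sub, hYdef, entry_matOp]
        simp [diagM, hx]
      rw [hsub]
      exact entry_norm_le _ _ _
    calc Metric.infDist y (commutant R) ≤ dist y x := Metric.infDist_le_dist_of_mem hxcomm
      _ ≤ dist Y c := hyx
      _ ≤ Metric.infDist Y (commutant (S : Set (LDK H m →L[ℂ] LDK H m))) + ε := le_of_lt hlt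
  -- the adNorm comparison
  have had0 : 0 ≤ adNorm R y := adNorm_nonneg h0R y
  have hadcomp : adNorm (S : Set (LDK H m →L[ℂ] LDK H m)) Y ≤ m * adNorm R y := by
    unfold adNorm
    apply Real.sSup_le
    · rintro r ⟨T, hTS, hT1, rfl⟩
      obtain ⟨M, hM, rfl⟩ := hTS
      rw [hYdef, diagM_mul, mul_diagM, matOp_sub]
      refine le_trans (matOp_norm_le _) ?_
      have hCjk : ∀ j k : Fin m, ‖y * M j k - M j k * y‖ ≤ adNorm R y := by
        intro j k
        have h1 : ‖M j k‖ ≤ 1 := by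
          rw [← entry_matOp M j k]
          exact le_trans (entry_norm_le _ j k) hT1
        exact le_adNorm (hM j k) h1
      have hsum : (∑ j : Fin m, ∑ k : Fin m, ‖y * M j k - M j k * y‖ ^ 2)
          ≤ (m * adNorm R y) ^ 2 := by
        calc ∑ j : Fin m, ∑ k : Fin m, ‖y * M j k - M j k * y‖ ^ 2
            ≤ ∑ _j : Fin m, ∑ _k : Fin m, (adNorm R y) ^ 2 :=
              Finset.sum_le_sum fun j _ => Finset.sum_le_sum fun k _ =>
                pow_le_pow_left₀ (norm_nonneg _) (hCjk j k) 2
          _ = (m * adNorm R y) ^ 2 := by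
              simp [Finset.sum_const, Finset.card_univ]
              ring
      calc Real.sqrt (∑ j, ∑ k, ‖y * M j k - M j k * y‖ ^ 2)
          ≤ Real.sqrt ((m * adNorm R y) ^ 2) := Real.sqrt_le_sqrt hsum
        _ = m * adNorm R y := Real.sqrt_sq (by positivity)
    · positivity
  -- put everything together
  calc Metric.infDist y (commutant R)
      ≤ Metric.infDist Y (commutant (S : Set (LDK H m →L[ℂ] LDK H m))) := hstep
    _ ≤ 12 * adNorm (S : Set (LDK H m →L[ℂ] LDK H m)) Y := h12 (LDK H m) S ξ0 hdense Y
    _ ≤ 12 * (m * adNorm R y) := by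
        have h12' : (0:ℝ) ≤ 12 := by norm_num
        exact mul_le_mul_of_nonneg_left hadcomp h12'
    _ = (12 * m) * adNorm R y := by ring
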